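/- Suppose that the index set {1, …, n} is partitioned into two nonempty disjoint sets S₀ and S₋ such that for all x ∈ Ω: (1) d_j(J(x)) ≤ 0 for every j ∈ S₀; (2) d_k(J(x)) < 0 for every k ∈ S₋; and (3) for every j ∈ S₀ there exists an index z = z(j) ∈ S₋ such that J(x)_{j z} ≠ 0. Then the system ẋ = f(x) is SOST on Ω with respect to the L∞ norm: for every ε > 0 and every τ > 0 there exists ℓ = ℓ(τ, ε) > 0 such that for any t₁ ≥ 0, any two solutions u, v : [t₁, ∞) → Ω of ẋ = f(x), and any t₂ ≥ t₁, one has ‖u(t₂+τ) − v(t₂+τ)‖_∞ ≤ (1+ε)·exp(−ℓ(t₂−t₁))·‖u(t₁) − v(t₁)‖_∞. -/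

import Mathlib

open Filter Topology

/-- The Jacobian matrix of `f` at `x`: `(jac f x) i j = ∂f_i/∂x_j (x)`. -/
noncomputable def jac {n : ℕ} (f : (Fin n → ℝ) → (Fin n → ℝ)) (x : Fin n → ℝ) :
    Matrix (Fin n) (Fin n) ℝ :=
  fun i j => fderiv ℝ f x (Pi.single j 1) i

/-- `dRow A j = A_{jj} + Σ_{i ≠ j} |A_{ji}|`: the `j`-th row sum of `A` with the
off-diagonal entries replaced by their absolute values. -/
def dRow {n : ℕ} (A : Matrix (Fin n) (Fin n) ℝ) (j : Fin n) : ℝ :=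
  A j j + ∑ i ∈ Finset.univ.erase j, |A j i|

lemma aux_deriv_nonneg {g : ℝ → ℝ} {g' a t : ℝ} (hat : a < t)
    (hg : HasDerivAt g g' t) (hmax : ∀ s ∈ Set.Icc a t, g s ≤ g t) : 0 ≤ g' := by
  have h := (hg.hasDerivWithinAt (s := Set.Iio t))
  rw [hasDerivWithinAt_iff_tendsto_slope] at h
  have hd : Set.Iio t \ {t} = Set.Iio t := by
    apply Set.diff_singleton_eq_self; simp
  rw [hd] at h
  refine ge_of_tendsto h ?_
  filter_upwards [Ioo_mem_nhdsLT_of_mem (Set.mem_Ioc.2 ⟨hat, le_rfl⟩)] with s hs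
  have h1 : g s - g t ≤ 0 := sub_nonpos.2 (hmax s ⟨le_of_lt hs.1, le_of_lt hs.2⟩)
  have h2 : s - t < 0 := sub_neg.2 hs.2
  show 0 ≤ slope g t s
  rw [slope_def_field, div_nonneg_iff]
  right; exact ⟨h1, le_of_lt h2⟩

lemma aux_jac_cont {n : ℕ} {f : (Fin n → ℝ) → (Fin n → ℝ)} (hf : ContDiff ℝ 1 f)
    (j i : Fin n) : Continuous fun x => jac f x j i := by
  have h := hf.continuous_fderiv one_ne_zero
  exact (continuous_apply j).comp (h.clm_apply continuous_const)

lemma aux_sup'_cont {X ι : Type*} [TopologicalSpace X] (s : Finset ι) (hs : s.Nonempty)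
    (f : ι → X → ℝ) (hf : ∀ i, Continuous (f i)) :
    Continuous fun x => s.sup' hs fun i => f i x := by
  revert hs
  induction s using Finset.cons_induction with
  | empty => intro hs; exact absurd hs (by simp)
  | cons i s his ih =>
    intro hs
    rcases Finset.eq_empty_or_nonempty s with rfl | hsn
    · simpa using hf i
    · simpa [Finset.sup'_cons hsn] using (hf i).max (ih hsn)

lemma aux_inf'_cont {X ι : Type*} [TopologicalSpace X] (s : Finset ι) (hs : s.Nonempty)
    (f : ι → X → ℝ) (hf : ∀ i, Continuous (f i)) :
    Continuous fun x => s.inf' hs fun i => f i x := by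
  revert hs
  induction s using Finset.cons_induction with
  | empty => intro hs; exact absurd hs (by simp)
  | cons i s his ih =>
    intro hs
    rcases Finset.eq_empty_or_nonempty s with rfl | hsn
    · simpa using hf i
    · simpa [Finset.inf'_cons hsn] using (hf i).min (ih hsn)

lemma aux_fderiv_apply {n : ℕ} {f : (Fin n → ℝ) → (Fin n → ℝ)}
    (x w : Fin n → ℝ) (j : Fin n) :
    fderiv ℝ f x w j = ∑ i, w i * jac f x j i := by
  have hw : w = ∑ i, w i • (Pi.single i (1:ℝ) : Fin n → ℝ) := by
    simp_rw [← Pi.single_smul, smul_eq_mul, mul_one]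
    exact (Finset.univ_sum_single w).symm
  conv_lhs => rw [hw]
  rw [map_sum]
  simp only [map_smul]
  rw [Finset.sum_apply]
  simp [jac, smul_eq_mul, mul_comm]

lemma aux_mvt_row {n : ℕ} {Ω : Set (Fin n → ℝ)} (hconv : Convex ℝ Ω)
    {f : (Fin n → ℝ) → (Fin n → ℝ)} (hf : ContDiff ℝ 1 f)
    (p : Fin n → ℝ) (hp : ∀ i, 0 < p i) (j : Fin n) {β c : ℝ} (hβ0 : 0 ≤ β)
    {a b : Fin n → ℝ} (ha : a ∈ Ω) (hb : b ∈ Ω)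
    (hβj : p j * (a j - b j) = β) (hβi : ∀ i, |p i * (a i - b i)| ≤ β)
    (hc : ∀ x ∈ Ω, jac f x j j + ∑ i ∈ Finset.univ.erase j, (p j / p i) * |jac f x j i| ≤ c) :
    p j * (f a j - f b j) ≤ c * β := by
  set w : Fin n → ℝ := a - b with hwdef
  set γ : ℝ → (Fin n → ℝ) := fun s => b + s • w with hγdef
  have hγcont : Continuous γ := by continuity
  have hγΩ : ∀ s ∈ Set.Icc (0:ℝ) 1, γ s ∈ Ω := by
    intro s hs
    have := hconv hb ha (by linarith [hs.2] : (0:ℝ) ≤ 1 - s) hs.1 (by ring)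
    convert this using 1
    simp only [hγdef, hwdef]
    funext i
    simp [Pi.sub_apply, smul_eq_mul]
    ring
  have hγd : ∀ s : ℝ, HasDerivAt γ w s := by
    intro s
    have := ((hasDerivAt_id s).smul_const w).const_add b
    rw [one_smul] at this
    exact this
  have hfd : ∀ s : ℝ, HasDerivAt (fun s => f (γ s) j) (fderiv ℝ f (γ s) w j) s := by
    intro s
    have h1 : HasFDerivAt f (fderiv ℝ f (γ s)) (γ s) :=
      (hf.differentiable one_ne_zero (γ s)).hasFDerivAt
    have h2 := h1.comp_hasDerivAt s (hγd s)
    exact hasDerivAt_pi.1 h2 j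
  have hint : IntervalIntegrable (fun s => fderiv ℝ f (γ s) w j) MeasureTheory.volume 0 1 := by
    apply Continuous.intervalIntegrable
    have : Continuous fun s => fderiv ℝ f (γ s) := (hf.continuous_fderiv one_ne_zero).comp hγcont
    exact (continuous_apply j).comp (this.clm_apply continuous_const)
  have hftc : ∫ s in (0:ℝ)..1, fderiv ℝ f (γ s) w j = f a j - f b j := by
    rw [intervalIntegral.integral_eq_sub_of_hasDerivAt (fun s _ => hfd s) hint]
    have h0 : γ 0 = b := by simp [hγdef]
    have h1 : γ 1 = a := by
      simp only [hγdef, hwdef, one_smul]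
      funext i; simp
    rw [h0, h1]
  have hptwise : ∀ s ∈ Set.Icc (0:ℝ) 1, p j * fderiv ℝ f (γ s) w j ≤ c * β := by
    intro s hs
    rw [aux_fderiv_apply]
    set x := γ s with hx
    have hxΩ := hγΩ s hs
    rw [Finset.mul_sum, ← Finset.add_sum_erase _ _ (Finset.mem_univ j)]
    have hdiag : p j * (w j * jac f x j j) = jac f x j j * β := by
      rw [← hβj]; simp only [hwdef, Pi.sub_apply]; ring
    have hoff : ∀ i ∈ Finset.univ.erase j,
        p j * (w i * jac f x j i) ≤ ((p j / p i) * |jac f x j i|) * β := by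
      intro i _
      have hpi := hp i
      have hpj := hp j
      have : p j * (w i * jac f x j i) = (p j / p i) * jac f x j i * (p i * w i) := by
        field_simp
      rw [this]
      calc (p j / p i) * jac f x j i * (p i * w i)
          ≤ |(p j / p i) * jac f x j i * (p i * w i)| := le_abs_self _
        _ = (p j / p i) * |jac f x j i| * |p i * w i| := by
            rw [abs_mul, abs_mul, abs_of_pos (div_pos hpj hpi)]
        _ ≤ (p j / p i) * |jac f x j i| * β := by
            apply mul_le_mul_of_nonneg_left _ (by positivity)
            simpa [hwdef] using hβi i
    calc p j * (w j * jac f x j j) + ∑ i ∈ Finset.univ.erase j, p j * (w i * jac f x j i)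
        ≤ jac f x j j * β + ∑ i ∈ Finset.univ.erase j, ((p j / p i) * |jac f x j i|) * β := by
          rw [hdiag]
          exact add_le_add le_rfl (Finset.sum_le_sum hoff)
      _ = (jac f x j j + ∑ i ∈ Finset.univ.erase j, (p j / p i) * |jac f x j i|) * β := by
          rw [← Finset.sum_mul]; ring
      _ ≤ c * β := mul_le_mul_of_nonneg_right (hc x hxΩ) hβ0
  have : p j * (f a j - f b j) = ∫ s in (0:ℝ)..1, p j * fderiv ℝ f (γ s) w j := by
    rw [intervalIntegral.integral_const_mul, hftc]
  rw [this]
  calc ∫ s in (0:ℝ)..1, p j * fderiv ℝ f (γ s) w j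
      ≤ ∫ _ in (0:ℝ)..1, c * β := by
        apply intervalIntegral.integral_mono_on zero_le_one (hint.const_mul _)
          intervalIntegrable_const
        exact hptwise
    _ = c * β := by simp

lemma aux_no_crossing {n : ℕ} {Ω : Set (Fin n → ℝ)} (hconv : Convex ℝ Ω)
    {f : (Fin n → ℝ) → (Fin n → ℝ)} (hf : ContDiff ℝ 1 f)
    (p : Fin n → ℝ) (hp : ∀ i, 0 < p i) {ℓ : ℝ} (hℓ : 0 < ℓ)
    (hc : ∀ x ∈ Ω, ∀ j, jac f x j j + ∑ i ∈ Finset.univ.erase j,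
      (p j / p i) * |jac f x j i| ≤ -(2*ℓ))
    {t₁ ts B : ℝ} (hB : 0 < B) (ht : t₁ < ts)
    {u v : ℝ → (Fin n → ℝ)} (huΩ : u ts ∈ Ω) (hvΩ : v ts ∈ Ω)
    (hu' : HasDerivAt u (f (u ts)) ts) (hv' : HasDerivAt v (f (v ts)) ts)
    (j : Fin n)
    (hmax : ∀ s ∈ Set.Icc t₁ ts, Real.exp (ℓ*(s-t₁)) * (p j * (u s j - v s j)) ≤ B)
    (heq : Real.exp (ℓ*(ts-t₁)) * (p j * (u ts j - v ts j)) = B)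
    (hall : ∀ i, |p i * (u ts i - v ts i)| ≤ B * Real.exp (-(ℓ*(ts-t₁)))) :
    False := by
  set E := Real.exp (ℓ*(ts-t₁)) with hE
  have hEpos : 0 < E := Real.exp_pos _
  have hEinv : B * Real.exp (-(ℓ*(ts-t₁))) * E = B := by
    rw [hE, mul_assoc, ← Real.exp_add]; simp
  set β := B * Real.exp (-(ℓ*(ts-t₁))) with hβ
  have hβpos : 0 < β := by positivity
  have hexp : HasDerivAt (fun t => Real.exp (ℓ*(t-t₁))) (E * ℓ) ts := by
    have h1 : HasDerivAt (fun t : ℝ => ℓ*(t-t₁)) ℓ ts := by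
      simpa using ((hasDerivAt_id ts).sub_const t₁).const_mul ℓ
    simpa [hE] using h1.exp
  have huj : HasDerivAt (fun t => u t j) (f (u ts) j) ts := hasDerivAt_pi.1 hu' j
  have hvj : HasDerivAt (fun t => v t j) (f (v ts) j) ts := hasDerivAt_pi.1 hv' j
  have hin : HasDerivAt (fun t => p j * (u t j - v t j))
      (p j * (f (u ts) j - f (v ts) j)) ts := (huj.sub hvj).const_mul (p j)
  have hg : HasDerivAt (fun t => Real.exp (ℓ*(t-t₁)) * (p j * (u t j - v t j)))
      ((E * ℓ) * (p j * (u ts j - v ts j)) + E * (p j * (f (u ts) j - f (v ts) j))) ts :=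
    hexp.mul hin
  have hge : 0 ≤ (E * ℓ) * (p j * (u ts j - v ts j)) + E * (p j * (f (u ts) j - f (v ts) j)) := by
    refine aux_deriv_nonneg ht hg ?_
    intro s hs
    calc Real.exp (ℓ*(s-t₁)) * (p j * (u s j - v s j)) ≤ B := hmax s hs
      _ = Real.exp (ℓ*(ts-t₁)) * (p j * (u ts j - v ts j)) := heq.symm
  have hjval : p j * (u ts j - v ts j) = β := by
    have h : E * (p j * (u ts j - v ts j)) = E * β := by
      rw [heq]; linarith [hEinv]
    exact mul_left_cancel₀ (ne_of_gt hEpos) h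
  have hmvt : p j * (f (u ts) j - f (v ts) j) ≤ -(2*ℓ) * β := by
    refine aux_mvt_row hconv hf p hp j (le_of_lt hβpos) huΩ hvΩ hjval ?_ (fun x hx => hc x hx j)
    exact hall
  have hlt : (E * ℓ) * (p j * (u ts j - v ts j)) + E * (p j * (f (u ts) j - f (v ts) j)) < 0 := by
    have h1 : (E * ℓ) * (p j * (u ts j - v ts j)) = ℓ * (E * β) := by rw [hjval]; ring
    have h2 : E * (p j * (f (u ts) j - f (v ts) j)) ≤ E * (-(2*ℓ) * β) :=
      mul_le_mul_of_nonneg_left hmvt (le_of_lt hEpos)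
    have hEβ : E * β = B := by rw [mul_comm]; exact hEinv
    nlinarith [hEβ, hB, hℓ]
  linarith

theorem sost_Linf_from_row_conditions {n : ℕ}
    (Ω : Set (Fin n → ℝ)) (hcomp : IsCompact Ω) (hconv : Convex ℝ Ω)
    (f : (Fin n → ℝ) → (Fin n → ℝ)) (hf : ContDiff ℝ 1 f)
    (S0 Sm : Finset (Fin n)) (hS0 : S0.Nonempty) (hSm : Sm.Nonempty)
    (hdisj : Disjoint S0 Sm) (hcover : S0 ∪ Sm = Finset.univ)
    (h1 : ∀ x ∈ Ω, ∀ j ∈ S0, dRow (jac f x) j ≤ 0)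
    (h2 : ∀ x ∈ Ω, ∀ k ∈ Sm, dRow (jac f x) k < 0)
    (h3 : ∀ x ∈ Ω, ∀ j ∈ S0, ∃ z ∈ Sm, jac f x j z ≠ 0) :
    ∀ ε > (0:ℝ), ∀ τ > (0:ℝ), ∃ ℓ > (0:ℝ), ∀ t₁ ≥ (0:ℝ), ∀ u v : ℝ → (Fin n → ℝ),
      (∀ t ≥ t₁, u t ∈ Ω) → (∀ t ≥ t₁, HasDerivWithinAt u (f (u t)) (Set.Ici t₁) t) →
      (∀ t ≥ t₁, v t ∈ Ω) → (∀ t ≥ t₁, HasDerivWithinAt v (f (v t)) (Set.Ici t₁) t) →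
      ∀ t₂ ≥ t₁,
        ‖u (t₂ + τ) - v (t₂ + τ)‖ ≤
          (1 + ε) * Real.exp (-ℓ * (t₂ - t₁)) * ‖u t₁ - v t₁‖ := by
  intro ε hε τ hτ
  by_cases hne : Ω.Nonempty
  swap
  · refine ⟨1, one_pos, ?_⟩
    intro t₁ _ u v huΩ _ _ _ t₂ ht₂
    exact absurd (huΩ t₁ le_rfl) (by simp [Set.not_nonempty_iff_eq_empty.mp hne])
  have hn : Nonempty (Fin n) := ⟨hS0.choose⟩
  have hJ : ∀ j i : Fin n, Continuous fun x => jac f x j i := aux_jac_cont hf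
  have hdRowCont : ∀ k : Fin n, Continuous fun x => dRow (jac f x) k := by
    intro k
    simp only [dRow]
    exact (hJ k k).add (continuous_finset_sum _ fun i _ => (hJ k i).abs)
  -- uniform bound m on the strictly negative rows
  obtain ⟨x₀, hx₀Ω, hx₀⟩ := hcomp.exists_isMaxOn hne
    (aux_sup'_cont Sm hSm (fun k x => dRow (jac f x) k) (fun k => hdRowCont k)).continuousOn
  set m : ℝ := -(Sm.sup' hSm fun k => dRow (jac f x₀) k) with hmdef
  have hmpos : 0 < m := by
    rw [hmdef, neg_pos]
    exact (Finset.sup'_lt_iff hSm).2 fun k hk => h2 x₀ hx₀Ω k hk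
  have hmle : ∀ x ∈ Ω, ∀ k ∈ Sm, dRow (jac f x) k ≤ -m := by
    intro x hx k hk
    have ha : dRow (jac f x) k ≤ Sm.sup' hSm fun k => dRow (jac f x) k :=
      Finset.le_sup' _ hk
    have hb : (Sm.sup' hSm fun i => dRow (jac f x) i) ≤ Sm.sup' hSm fun i => dRow (jac f x₀) i :=
      hx₀ hx
    rw [hmdef]; linarith
  -- uniform bound M on the coupling sums for rows in Sm
  obtain ⟨x₁, hx₁Ω, hx₁⟩ := hcomp.exists_isMaxOn hne
    (aux_sup'_cont Sm hSm (fun k x => ∑ i ∈ S0, |jac f x k i|)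
      (fun k => continuous_finset_sum _ fun i _ => (hJ k i).abs)).continuousOn
  set M : ℝ := Sm.sup' hSm (fun k => ∑ i ∈ S0, |jac f x₁ k i|) with hMdef
  have hMnonneg : 0 ≤ M := by
    obtain ⟨k, hk⟩ := hSm
    rw [hMdef]
    exact le_trans (Finset.sum_nonneg fun i _ => abs_nonneg _)
      (Finset.le_sup' (fun k => ∑ i ∈ S0, |jac f x₁ k i|) hk)
  have hMle : ∀ x ∈ Ω, ∀ k ∈ Sm, (∑ i ∈ S0, |jac f x k i|) ≤ M := by
    intro x hx k hk
    have ha : (∑ i ∈ S0, |jac f x k i|) ≤ Sm.sup' hSm fun k => ∑ i ∈ S0, |jac f x k i| :=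
      Finset.le_sup' (fun k => ∑ i ∈ S0, |jac f x k i|) hk
    have hb : (Sm.sup' hSm fun k => ∑ i ∈ S0, |jac f x k i|)
        ≤ Sm.sup' hSm fun k => ∑ i ∈ S0, |jac f x₁ k i| := hx₁ hx
    rw [hMdef]; linarith
  -- uniform lower bound c on coupling sums for rows in S0
  obtain ⟨x₂, hx₂Ω, hx₂⟩ := hcomp.exists_isMinOn hne
    (aux_inf'_cont S0 hS0 (fun j x => ∑ i ∈ Sm, |jac f x j i|)
      (fun j => continuous_finset_sum _ fun i _ => (hJ j i).abs)).continuousOn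
  set cC : ℝ := S0.inf' hS0 (fun j => ∑ i ∈ Sm, |jac f x₂ j i|) with hcCdef
  have hcCpos : 0 < cC := by
    rw [hcCdef]
    refine (Finset.lt_inf'_iff hS0).2 fun j hj => ?_
    obtain ⟨z, hz, hz0⟩ := h3 x₂ hx₂Ω j hj
    exact Finset.sum_pos' (fun i _ => abs_nonneg _) ⟨z, hz, abs_pos.2 hz0⟩
  have hcCle : ∀ x ∈ Ω, ∀ j ∈ S0, cC ≤ ∑ i ∈ Sm, |jac f x j i| := by
    intro x hx j hj
    have ha : (S0.inf' hS0 fun j => ∑ i ∈ Sm, |jac f x j i|) ≤ ∑ i ∈ Sm, |jac f x j i| :=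
      Finset.inf'_le (fun j => ∑ i ∈ Sm, |jac f x j i|) hj
    have hb : (S0.inf' hS0 fun j => ∑ i ∈ Sm, |jac f x₂ j i|)
        ≤ S0.inf' hS0 fun j => ∑ i ∈ Sm, |jac f x j i| := hx₂ hx
    rw [hcCdef]; linarith
  -- choose δ and p and ℓ
  set δ : ℝ := min ε (m / (2*(M+1))) with hδdef
  have hδpos : 0 < δ := lt_min hε (by positivity)
  have hδε : δ ≤ ε := min_le_left _ _
  have hδM : δ * M ≤ m/2 := by
    have ha : δ ≤ m/(2*(M+1)) := min_le_right _ _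
    have hb : (m/(2*(M+1))) * M ≤ m/2 := by
      rw [div_mul_eq_mul_div, div_le_div_iff₀ (by positivity) (by norm_num)]
      nlinarith
    calc δ * M ≤ (m/(2*(M+1))) * M := mul_le_mul_of_nonneg_right ha hMnonneg
      _ ≤ m/2 := hb
  set p : Fin n → ℝ := fun i => if i ∈ Sm then 1 + δ else 1 with hpdef
  have hp1 : ∀ i, 1 ≤ p i := by
    intro i; by_cases h : i ∈ Sm <;> simp [hpdef, h] <;> linarith
  have hp2 : ∀ i, p i ≤ 1 + δ := by
    intro i; by_cases h : i ∈ Sm <;> simp [hpdef, h] <;> linarith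
  have hppos : ∀ i, 0 < p i := fun i => lt_of_lt_of_le one_pos (hp1 i)
  set ℓ : ℝ := (min (m/2) (δ/(1+δ)*cC))/2 with hℓdef
  have hℓpos : 0 < ℓ := by
    apply div_pos _ two_pos
    exact lt_min (by positivity) (by positivity)
  have h2ℓ : 2*ℓ = min (m/2) (δ/(1+δ)*cC) := by rw [hℓdef]; ring
  have hcover' : ∀ i : Fin n, i ∈ S0 ∨ i ∈ Sm := by
    intro i
    have : i ∈ S0 ∪ Sm := hcover ▸ Finset.mem_univ i
    exact Finset.mem_union.1 this
  have hS0Sm : ∀ i, i ∈ S0 → i ∉ Sm := fun i hi => Finset.disjoint_left.1 hdisj hi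
  -- the key uniform row bound for the scaled Jacobian
  have hcrow : ∀ x ∈ Ω, ∀ j, jac f x j j + ∑ i ∈ Finset.univ.erase j,
      (p j / p i) * |jac f x j i| ≤ -(2*ℓ) := by
    intro x hx j
    rcases hcover' j with hj | hj
    · -- j ∈ S0
      have hpj : p j = 1 := by simp [hpdef, hS0Sm j hj]
      have hSm_sub : Sm ⊆ Finset.univ.erase j := by
        intro i hi
        exact Finset.mem_erase.2 ⟨fun he => hS0Sm j hj (he ▸ hi), Finset.mem_univ i⟩
      have hterm : ∀ i ∈ Finset.univ.erase j, (p j / p i) * |jac f x j i|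
          = |jac f x j i| - (if i ∈ Sm then (δ/(1+δ)) * |jac f x j i| else 0) := by
        intro i _
        have h1δ : (1:ℝ) + δ ≠ 0 := by positivity
        by_cases hi : i ∈ Sm
        · have e2 : p i = 1 + δ := by simp [hpdef, hi]
          rw [hpj, e2, if_pos hi]
          field_simp
          ring
        · have e2 : p i = 1 := by simp [hpdef, hi]
          rw [hpj, e2, if_neg hi]
          simp
      rw [Finset.sum_congr rfl hterm, Finset.sum_sub_distrib, Finset.sum_ite_mem,
        Finset.inter_eq_right.2 hSm_sub, ← Finset.mul_sum]
      have hr1 : jac f x j j + ∑ i ∈ Finset.univ.erase j, |jac f x j i| ≤ 0 := h1 x hx j hj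
      have hr2 : (δ/(1+δ)) * cC ≤ (δ/(1+δ)) * ∑ i ∈ Sm, |jac f x j i| :=
        mul_le_mul_of_nonneg_left (hcCle x hx j hj) (by positivity)
      have hr3 : 2*ℓ ≤ δ/(1+δ)*cC := h2ℓ ▸ min_le_right _ _
      linarith
    · -- j ∈ Sm
      have hpj : p j = 1 + δ := by simp [hpdef, hj]
      have hS0_sub : S0 ⊆ Finset.univ.erase j := by
        intro i hi
        exact Finset.mem_erase.2 ⟨fun he => hS0Sm i hi (he ▸ hj), Finset.mem_univ i⟩
      have hterm : ∀ i ∈ Finset.univ.erase j, (p j / p i) * |jac f x j i|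
          = |jac f x j i| + (if i ∈ S0 then δ * |jac f x j i| else 0) := by
        intro i _
        have h1δ : (1:ℝ) + δ ≠ 0 := by positivity
        rcases hcover' i with hi | hi
        · have e2 : p i = 1 := by simp [hpdef, hS0Sm i hi]
          rw [hpj, e2, if_pos hi]
          ring
        · have hi0 : i ∉ S0 := fun h => hS0Sm i h hi
          have e2 : p i = 1 + δ := by simp [hpdef, hi]
          rw [hpj, e2, if_neg hi0]
          field_simp
          simp
      rw [Finset.sum_congr rfl hterm, Finset.sum_add_distrib, Finset.sum_ite_mem,
        Finset.inter_eq_right.2 hS0_sub, ← Finset.mul_sum]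
      have hr1 : jac f x j j + ∑ i ∈ Finset.univ.erase j, |jac f x j i| ≤ -m := hmle x hx j hj
      have hr2 : δ * ∑ i ∈ S0, |jac f x j i| ≤ δ * M :=
        mul_le_mul_of_nonneg_left (hMle x hx j hj) (le_of_lt hδpos)
      have hr3 : 2*ℓ ≤ m/2 := h2ℓ ▸ min_le_left _ _
      linarith
  refine ⟨ℓ, hℓpos, ?_⟩
  intro t₁ _ u v huΩ hu' hvΩ hv' t₂ ht₂
  have hucont : ContinuousOn u (Set.Ici t₁) := fun t ht => (hu' t ht).continuousWithinAt
  have hvcont : ContinuousOn v (Set.Ici t₁) := fun t ht => (hv' t ht).continuousWithinAt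
  set Q : ℝ := ‖(fun i => p i * (u t₁ i - v t₁ i) : Fin n → ℝ)‖ with hQdef
  set N : ℝ := ‖u t₁ - v t₁‖ with hNdef
  have hQN : Q ≤ (1+δ) * N := by
    rw [hQdef]
    refine (pi_norm_le_iff_of_nonneg (by positivity)).2 fun i => ?_
    rw [Real.norm_eq_abs, abs_mul, abs_of_pos (hppos i)]
    have ha : |u t₁ i - v t₁ i| ≤ N := by
      have := norm_le_pi_norm (u t₁ - v t₁) i
      simpa [hNdef, Real.norm_eq_abs] using this
    have hb := hp2 i
    have hc' := hppos i
    nlinarith [abs_nonneg (u t₁ i - v t₁ i)]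
  -- main decay estimate
  have key : ∀ T ≥ t₁, ∀ i, Real.exp (ℓ*(T-t₁)) * |p i * (u T i - v T i)| ≤ Q := by
    intro T hT i0
    refine le_of_forall_pos_le_add ?_
    intro δ' hδ'
    by_contra hcon
    push_neg at hcon
    set B := Q + δ' with hBdef
    have hBpos : 0 < B := add_pos_of_nonneg_of_pos (norm_nonneg _) hδ'
    set F : ℝ → ℝ := fun t => ‖(fun i => p i * (u t i - v t i) : Fin n → ℝ)‖ with hFdef
    set Φ : ℝ → ℝ := fun t => Real.exp (ℓ*(t-t₁)) * F t with hΦdef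
    have hFcont : ContinuousOn F (Set.Ici t₁) := by
      apply ContinuousOn.norm
      apply continuousOn_pi.2
      intro i
      exact continuousOn_const.mul (((continuous_apply i).comp_continuousOn hucont).sub
        ((continuous_apply i).comp_continuousOn hvcont))
    have hexpc : Continuous fun t : ℝ => Real.exp (ℓ*(t-t₁)) :=
      Real.continuous_exp.comp (continuous_const.mul (continuous_id.sub continuous_const))
    have hΦcont : ContinuousOn Φ (Set.Ici t₁) := hexpc.continuousOn.mul hFcont
    have hFabs : ∀ t, ∀ i, |p i * (u t i - v t i)| ≤ F t := by
      intro t i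
      have := norm_le_pi_norm (fun i => p i * (u t i - v t i) : Fin n → ℝ) i
      simpa only [hFdef, Real.norm_eq_abs] using this
    have hΦT : B < Φ T := by
      refine lt_of_lt_of_le hcon ?_
      exact mul_le_mul_of_nonneg_left (hFabs T i0) (le_of_lt (Real.exp_pos _))
    set S : Set ℝ := Set.Icc t₁ T ∩ Φ ⁻¹' (Set.Ici B) with hSdef
    have hSclosed : IsClosed S :=
      (hΦcont.mono Set.Icc_subset_Ici_self).preimage_isClosed_of_isClosed
        isClosed_Icc isClosed_Ici
    have hTmem : T ∈ S := ⟨⟨hT, le_rfl⟩, le_of_lt hΦT⟩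
    have hSne : S.Nonempty := ⟨T, hTmem⟩
    have hSbdd : BddBelow S := ⟨t₁, fun t ht => ht.1.1⟩
    set ts := sInf S with htsdef
    have htsS : ts ∈ S := hSclosed.csInf_mem hSne hSbdd
    have hts1 : t₁ ≤ ts := htsS.1.1
    have htsT : ts ≤ T := htsS.1.2
    have hΦt₁ : Φ t₁ = Q := by simp [hΦdef, hFdef, hQdef]
    have hlt1 : t₁ < ts := by
      rcases eq_or_lt_of_le hts1 with he | h
      · exfalso
        have := htsS.2
        rw [← he] at this
        simp only [Set.mem_preimage, Set.mem_Ici] at this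
        rw [hΦt₁] at this
        linarith
      · exact h
    have hbefore : ∀ s ∈ Set.Ico t₁ ts, Φ s < B := by
      intro s hs
      by_contra hge
      push_neg at hge
      have hmem : s ∈ S := ⟨⟨hs.1, le_trans (le_of_lt hs.2) htsT⟩, hge⟩
      have := csInf_le hSbdd hmem
      rw [← htsdef] at this
      linarith [hs.2]
    have hΦtsle : Φ ts ≤ B := by
      have hnb : (𝓝[Set.Ico t₁ ts] ts).NeBot := right_nhdsWithin_Ico_neBot hlt1
      have htend : Tendsto Φ (𝓝[Set.Ico t₁ ts] ts) (𝓝 (Φ ts)) :=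
        (hΦcont ts hts1).mono (fun s hs => hs.1 : Set.Ico t₁ ts ⊆ Set.Ici t₁)
      refine le_of_tendsto htend ?_
      exact eventually_nhdsWithin_of_forall fun s hs => le_of_lt (hbefore s hs)
    have hΦtsB : Φ ts = B := le_antisymm hΦtsle htsS.2
    -- pick the maximizing coordinate
    obtain ⟨j, -, hjmax⟩ := Finset.exists_max_image Finset.univ
      (fun i => |p i * (u ts i - v ts i)|) Finset.univ_nonempty
    have hFts : F ts = |p j * (u ts j - v ts j)| := by
      refine le_antisymm ?_ (hFabs ts j)
      rw [hFdef]
      refine (pi_norm_le_iff_of_nonneg (abs_nonneg _)).2 fun i => ?_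
      simpa only [Real.norm_eq_abs] using hjmax i (Finset.mem_univ i)
    have hEts : Real.exp (ℓ*(ts-t₁)) * F ts = B := hΦtsB
    have hFtsval : F ts = B * Real.exp (-(ℓ*(ts-t₁))) := by
      have hEpos : (0:ℝ) < Real.exp (ℓ*(ts-t₁)) := Real.exp_pos _
      rw [Real.exp_neg]
      field_simp
      linarith [hEts]
    have hallb : ∀ i, |p i * (u ts i - v ts i)| ≤ B * Real.exp (-(ℓ*(ts-t₁))) := by
      intro i
      rw [← hFtsval]
      exact hFabs ts i
    have hu'' : HasDerivAt u (f (u ts)) ts :=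
      (hu' ts hts1).hasDerivAt (Ici_mem_nhds hlt1)
    have hv'' : HasDerivAt v (f (v ts)) ts :=
      (hv' ts hts1).hasDerivAt (Ici_mem_nhds hlt1)
    have hmaxabs : ∀ s ∈ Set.Icc t₁ ts, Real.exp (ℓ*(s-t₁)) * |p j * (u s j - v s j)| ≤ B := by
      intro s hs
      have ha : |p j * (u s j - v s j)| ≤ F s := hFabs s j
      have hb : Φ s ≤ B := by
        rcases eq_or_lt_of_le hs.2 with he | hlt
        · rw [he]; exact le_of_eq hΦtsB
        · exact le_of_lt (hbefore s ⟨hs.1, hlt⟩)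
      calc Real.exp (ℓ*(s-t₁)) * |p j * (u s j - v s j)|
          ≤ Real.exp (ℓ*(s-t₁)) * F s :=
            mul_le_mul_of_nonneg_left ha (le_of_lt (Real.exp_pos _))
        _ ≤ B := hb
    rcases abs_cases (p j * (u ts j - v ts j)) with ⟨habs, -⟩ | ⟨habs, -⟩
    · refine aux_no_crossing hconv hf p hppos hℓpos hcrow hBpos hlt1
        (huΩ ts hts1) (hvΩ ts hts1) hu'' hv'' j ?_ ?_ hallb
      · intro s hs
        refine le_trans ?_ (hmaxabs s hs)
        exact mul_le_mul_of_nonneg_left (le_abs_self _) (le_of_lt (Real.exp_pos _))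
      · rw [← hΦtsB, hΦdef]
        simp only
        rw [hFts, habs]
    · have hswap : ∀ t : ℝ, ∀ i, |p i * (v t i - u t i)| = |p i * (u t i - v t i)| := by
        intro t i
        rw [abs_mul, abs_mul, abs_sub_comm]
      refine aux_no_crossing hconv hf p hppos hℓpos hcrow hBpos hlt1
        (hvΩ ts hts1) (huΩ ts hts1) hv'' hu'' j ?_ ?_
        (fun i => by rw [hswap ts i]; exact hallb i)
      · intro s hs
        have h6 : p j * (v s j - u s j) = -(p j * (u s j - v s j)) := by ring
        have h7 : p j * (v s j - u s j) ≤ |p j * (u s j - v s j)| := by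
          rw [h6]; exact neg_le_abs _
        exact le_trans (mul_le_mul_of_nonneg_left h7 (le_of_lt (Real.exp_pos _)))
          (hmaxabs s hs)
      · have h5 : p j * (v ts j - u ts j) = F ts := by
          rw [hFts, habs]; ring
        rw [h5]
        exact hΦtsB
  -- final assembly
  set t := t₂ + τ with htdef
  have htt : t₁ ≤ t := by rw [htdef]; linarith
  have hR0 : (0:ℝ) ≤ (1 + ε) * Real.exp (-ℓ * (t₂ - t₁)) * N := by positivity
  refine (pi_norm_le_iff_of_nonneg hR0).2 fun i => ?_
  have hk := key t htt i
  have hEpos : (0:ℝ) < Real.exp (ℓ*(t-t₁)) := Real.exp_pos _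
  have h8 : |u t i - v t i| ≤ |p i * (u t i - v t i)| := by
    rw [abs_mul, abs_of_pos (hppos i)]
    nlinarith [hp1 i, abs_nonneg (u t i - v t i)]
  have h9 : |p i * (u t i - v t i)| ≤ Real.exp (-(ℓ*(t-t₁))) * Q := by
    rw [Real.exp_neg, inv_mul_eq_div, le_div_iff₀ hEpos, mul_comm]
    exact hk
  have h10 : Real.exp (-(ℓ*(t-t₁))) = Real.exp (-ℓ*(t₂-t₁)) * Real.exp (-(ℓ*τ)) := by
    rw [← Real.exp_add]
    congr 1
    rw [htdef]; ring
  have h11 : Real.exp (-(ℓ*τ)) ≤ 1 := by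
    rw [Real.exp_le_one_iff]
    nlinarith
  have hQ0 : 0 ≤ Q := norm_nonneg _
  have hN0 : 0 ≤ N := norm_nonneg _
  rw [Pi.sub_apply, Real.norm_eq_abs]
  calc |u t i - v t i| ≤ Real.exp (-(ℓ*(t-t₁))) * Q := le_trans h8 h9
    _ = Real.exp (-ℓ*(t₂-t₁)) * (Real.exp (-(ℓ*τ)) * Q) := by rw [h10]; ring
    _ ≤ Real.exp (-ℓ*(t₂-t₁)) * ((1+ε) * N) := by
        refine mul_le_mul_of_nonneg_left ?_ (le_of_lt (Real.exp_pos _))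
        calc Real.exp (-(ℓ*τ)) * Q ≤ 1 * Q :=
              mul_le_mul_of_nonneg_right h11 hQ0
          _ = Q := one_mul _
          _ ≤ (1+δ) * N := hQN
          _ ≤ (1+ε) * N := mul_le_mul_of_nonneg_right (by linarith) hN0
    _ = (1+ε) * Real.exp (-ℓ*(t₂-t₁)) * N := by ring
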